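/- Every t-layer ReLU-activated decoder is a spline of degree 3^t: if δ_t = φ_t ∘ β_t ∘ φ_{t−1} ∘ β_{t−1} ∘ ⋯ ∘ φ_1 ∘ β_1 : ℝ^{n×p} → ℝ^{n_{t+1}×p}, where each β_i is a multihead ReLU masked attention module and each φ_i is a ReLU feed-forward neural network applied columnwise, then δ_t is a matrix-valued spline of degree 3^t. -/

import Mathlib

noncomputable section

open Matrix

/-- The rectified linear unit. -/
def relu (x : ℝ) : ℝ := max x 0

/-- Entrywise ReLU of a matrix. -/
def matRelu {a b : ℕ} (M : Matrix (Fin a) (Fin b) ℝ) : Matrix (Fin a) (Fin b) ℝ :=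
  Matrix.of fun i j => relu (M i j)

/-- A continuous function `f : ℝ^ι → ℝ` is a (polynomial) spline of degree `k` if there are
polynomials `π_1, …, π_b`, each of total degree at most `k`, such that on every (nonempty) cell
of the induced semialgebraic sign partition, `f` agrees with a polynomial of degree at most `k`. -/
def IsSpline (ι : Type) [Fintype ι] (k : ℕ) (f : (ι → ℝ) → ℝ) : Prop :=
  Continuous f ∧
  ∃ (b : ℕ) (π : Fin b → MvPolynomial ι ℝ),
    (∀ i, (π i).totalDegree ≤ k) ∧
    ∀ θ : Fin b → SignType,
      ∃ ξ : MvPolynomial ι ℝ, ξ.totalDegree ≤ k ∧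
        ∀ x : ι → ℝ, (∀ i, SignType.sign (MvPolynomial.eval x (π i)) = θ i) →
          f x = MvPolynomial.eval x ξ

/-- A matrix-variate, matrix-valued function is a spline of degree `k` if each coordinate
function, regarded as a function of the entries of the input matrix, is a spline of degree `k`. -/
def IsMatrixSpline {n p m q : ℕ} (k : ℕ)
    (f : Matrix (Fin n) (Fin p) ℝ → Matrix (Fin m) (Fin q) ℝ) : Prop :=
  ∀ (i : Fin m) (j : Fin q),
    IsSpline (Fin n × Fin p) k (fun x => f (Matrix.of fun a b => x (a, b)) i j)

/-- The ReLU-activated masked attention module: the score matrix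
`(A_K X + B_K)ᵀ (A_Q X + B_Q)` is ReLU'd on its upper-triangular part (`i ≤ j`) and the
strictly lower-triangular entries (`i > j`) are set to `0`, before multiplying by the values. -/
def maskedAttention {n p d m : ℕ}
    (AQ AK : Matrix (Fin d) (Fin n) ℝ) (AV : Matrix (Fin m) (Fin n) ℝ)
    (BQ BK : Matrix (Fin d) (Fin p) ℝ) (BV : Matrix (Fin m) (Fin p) ℝ)
    (X : Matrix (Fin n) (Fin p) ℝ) : Matrix (Fin m) (Fin p) ℝ :=
  (AV * X + BV) *
    Matrix.of (fun i j : Fin p =>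
      if i ≤ j then relu (((AK * X + BK)ᵀ * (AQ * X + BQ)) i j) else 0)

/-- An `h`-headed ReLU masked attention module: `h` masked attention modules stacked
vertically, giving a map `ℝ^{n×p} → ℝ^{hm×p}`. -/
def multiheadMaskedAttention {n p d m h : ℕ}
    (AQ AK : Fin h → Matrix (Fin d) (Fin n) ℝ) (AV : Fin h → Matrix (Fin m) (Fin n) ℝ)
    (BQ BK : Fin h → Matrix (Fin d) (Fin p) ℝ) (BV : Fin h → Matrix (Fin m) (Fin p) ℝ)
    (X : Matrix (Fin n) (Fin p) ℝ) : Matrix (Fin (h * m)) (Fin p) ℝ :=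
  Matrix.of fun i j =>
    maskedAttention (AQ (finProdFinEquiv.symm i).1) (AK (finProdFinEquiv.symm i).1)
      (AV (finProdFinEquiv.symm i).1) (BQ (finProdFinEquiv.symm i).1)
      (BK (finProdFinEquiv.symm i).1) (BV (finProdFinEquiv.symm i).1) X
      (finProdFinEquiv.symm i).2 j

/-- ReLU feed-forward neural networks `φ(x) = A_{l+1} σ_l A_l ⋯ σ_1 A_1 x + b_{l+1}`, where
`σ_i(x) = ReLU(x + b_i)` coordinatewise: the base case is an affine map, and each additional
layer precomposes with `x ↦ ReLU(A x + b)`. -/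
inductive IsNN : ∀ {a b : ℕ}, ((Fin a → ℝ) → (Fin b → ℝ)) → Prop
  | affine {a b : ℕ} (A : Matrix (Fin b) (Fin a) ℝ) (c : Fin b → ℝ) :
      IsNN (fun x => A.mulVec x + c)
  | layer {a b c : ℕ} (A : Matrix (Fin b) (Fin a) ℝ) (v : Fin b → ℝ)
      {g : (Fin b → ℝ) → (Fin c → ℝ)} (hg : IsNN g) :
      IsNN (fun x => g (fun i => relu (A.mulVec x i + v i)))

/-- Apply a map `φ : ℝ^a → ℝ^c` columnwise to a matrix `X ∈ ℝ^{a×p}`. -/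
def colwise {a c p : ℕ} (φ : (Fin a → ℝ) → (Fin c → ℝ))
    (X : Matrix (Fin a) (Fin p) ℝ) : Matrix (Fin c) (Fin p) ℝ :=
  Matrix.of fun i j => φ (fun r => X r j) i

/-- A decoder block: a multihead ReLU masked attention module followed by a ReLU feed-forward
neural network applied columnwise. -/
def IsDecoderBlock {n r p : ℕ}
    (f : Matrix (Fin n) (Fin p) ℝ → Matrix (Fin r) (Fin p) ℝ) : Prop :=
  ∃ (d m h : ℕ)
    (AQ AK : Fin h → Matrix (Fin d) (Fin n) ℝ) (AV : Fin h → Matrix (Fin m) (Fin n) ℝ)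
    (BQ BK : Fin h → Matrix (Fin d) (Fin p) ℝ) (BV : Fin h → Matrix (Fin m) (Fin p) ℝ)
    (φ : (Fin (h * m) → ℝ) → (Fin r → ℝ)), IsNN φ ∧
      f = fun X => colwise φ (multiheadMaskedAttention AQ AK AV BQ BK BV X)

/-- A `t`-layer decoder: the composition of `t` decoder blocks. -/
inductive IsDecoder {p : ℕ} : ∀ {n r : ℕ}, ℕ →
    (Matrix (Fin n) (Fin p) ℝ → Matrix (Fin r) (Fin p) ℝ) → Prop
  | block {n r : ℕ} (f : Matrix (Fin n) (Fin p) ℝ → Matrix (Fin r) (Fin p) ℝ)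
      (hf : IsDecoderBlock f) : IsDecoder 1 f
  | comp {n s r : ℕ} (t : ℕ) (f : Matrix (Fin n) (Fin p) ℝ → Matrix (Fin s) (Fin p) ℝ)
      (g : Matrix (Fin s) (Fin p) ℝ → Matrix (Fin r) (Fin p) ℝ)
      (hf : IsDecoderBlock f) (hg : IsDecoder t g) : IsDecoder (t + 1) (g ∘ f)

section Aux
open MvPolynomial
lemma relu_continuous : Continuous relu := continuous_id.max continuous_const

lemma my_eval_bind₁ {σ τ : Type*} (x : τ → ℝ) (h : σ → MvPolynomial τ ℝ)
    (φ : MvPolynomial σ ℝ) :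
    eval x (bind₁ h φ) = eval (fun i => eval x (h i)) φ := by
  exact eval₂Hom_bind₁ (RingHom.id ℝ) x h φ

lemma my_totalDegree_bind₁ {σ τ : Type*} {k : ℕ} (h : σ → MvPolynomial τ ℝ)
    (hh : ∀ j, (h j).totalDegree ≤ k) (φ : MvPolynomial σ ℝ) :
    (bind₁ h φ).totalDegree ≤ φ.totalDegree * k := by
  conv_lhs => rw [φ.as_sum]
  rw [map_sum]
  refine MvPolynomial.totalDegree_finsetSum_le fun v hv => ?_
  rw [bind₁_monomial]
  refine (totalDegree_mul _ _).trans ?_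
  rw [totalDegree_C, zero_add]
  refine (totalDegree_finset_prod _ _).trans ?_
  calc ∑ i ∈ v.support, (h i ^ v i).totalDegree
      ≤ ∑ i ∈ v.support, v i * k := by
        refine Finset.sum_le_sum fun i _ => ?_
        exact (totalDegree_pow _ _).trans (Nat.mul_le_mul_left _ (hh i))
    _ = (∑ i ∈ v.support, v i) * k := by rw [Finset.sum_mul]
    _ ≤ φ.totalDegree * k := by
        refine Nat.mul_le_mul_right _ ?_
        simpa [Finsupp.sum] using MvPolynomial.le_totalDegree hv

section SplineLemmas
variable {ι : Type} [Fintype ι]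

/-- Package a general finite index type into `IsSpline`. -/
lemma isSpline_of_fam {κ : Type} [Fintype κ] {k : ℕ} {f : (ι → ℝ) → ℝ}
    (hc : Continuous f) (π : κ → MvPolynomial ι ℝ)
    (hdeg : ∀ i, (π i).totalDegree ≤ k)
    (hcell : ∀ θ : κ → SignType,
      ∃ ξ : MvPolynomial ι ℝ, ξ.totalDegree ≤ k ∧
        ∀ x : ι → ℝ, (∀ i, SignType.sign (eval x (π i)) = θ i) → f x = eval x ξ) :
    IsSpline ι k f := by
  refine ⟨hc, Fintype.card κ, π ∘ (Fintype.equivFin κ).symm, fun i => hdeg _, fun θ => ?_⟩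
  obtain ⟨ξ, h1, h2⟩ := hcell (θ ∘ (Fintype.equivFin κ))
  refine ⟨ξ, h1, fun x hx => h2 x fun i => ?_⟩
  simpa using hx ((Fintype.equivFin κ) i)

lemma isSpline_eval {k : ℕ} {ξ : MvPolynomial ι ℝ} (h : ξ.totalDegree ≤ k) :
    IsSpline ι k (fun x => eval x ξ) := by
  refine ⟨ξ.continuous_eval, 0, Fin.elim0, fun i => i.elim0, fun θ => ⟨ξ, h, fun x _ => rfl⟩⟩

lemma isSpline_const {k : ℕ} (c : ℝ) : IsSpline ι k (fun _ => c) := by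
  simpa using isSpline_eval (ι := ι) (k := k) (ξ := C c) (by simp)

lemma IsSpline.mono {k k' : ℕ} {f : (ι → ℝ) → ℝ} (h : IsSpline ι k f) (hk : k ≤ k') :
    IsSpline ι k' f := by
  obtain ⟨hc, b, π, hdeg, hcell⟩ := h
  refine ⟨hc, b, π, fun i => (hdeg i).trans hk, fun θ => ?_⟩
  obtain ⟨ξ, h1, h2⟩ := hcell θ
  exact ⟨ξ, h1.trans hk, h2⟩

lemma IsSpline.add {k : ℕ} {f g : (ι → ℝ) → ℝ} (hf : IsSpline ι k f) (hg : IsSpline ι k g) :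
    IsSpline ι k (fun x => f x + g x) := by
  obtain ⟨hcf, b1, π1, hd1, hc1⟩ := hf
  obtain ⟨hcg, b2, π2, hd2, hc2⟩ := hg
  refine isSpline_of_fam (hcf.add hcg) (Sum.elim π1 π2) (by rintro (i|i) <;> simp [hd1, hd2])
    fun θ => ?_
  obtain ⟨ξ1, e1, e1'⟩ := hc1 (θ ∘ Sum.inl)
  obtain ⟨ξ2, e2, e2'⟩ := hc2 (θ ∘ Sum.inr)
  refine ⟨ξ1 + ξ2, (totalDegree_add _ _).trans (max_le e1 e2), fun x hx => ?_⟩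
  rw [map_add, e1' x fun i => hx (Sum.inl i), e2' x fun i => hx (Sum.inr i)]

lemma IsSpline.mul {k l : ℕ} {f g : (ι → ℝ) → ℝ} (hf : IsSpline ι k f) (hg : IsSpline ι l g) :
    IsSpline ι (k + l) (fun x => f x * g x) := by
  obtain ⟨hcf, b1, π1, hd1, hc1⟩ := hf
  obtain ⟨hcg, b2, π2, hd2, hc2⟩ := hg
  refine isSpline_of_fam (hcf.mul hcg) (Sum.elim π1 π2)
    (by rintro (i|i) <;> simp <;> [exact (hd1 i).trans (Nat.le_add_right _ _);
      exact (hd2 i).trans (Nat.le_add_left _ _)]) fun θ => ?_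
  obtain ⟨ξ1, e1, e1'⟩ := hc1 (θ ∘ Sum.inl)
  obtain ⟨ξ2, e2, e2'⟩ := hc2 (θ ∘ Sum.inr)
  refine ⟨ξ1 * ξ2, (totalDegree_mul _ _).trans (Nat.add_le_add e1 e2), fun x hx => ?_⟩
  rw [_root_.map_mul, e1' x fun i => hx (Sum.inl i), e2' x fun i => hx (Sum.inr i)]

lemma isSpline_sum {k : ℕ} {κ : Type*} (s : Finset κ) (f : κ → (ι → ℝ) → ℝ)
    (h : ∀ i ∈ s, IsSpline ι k (f i)) :
    IsSpline ι k (fun x => ∑ i ∈ s, f i x) := by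
  classical
  induction s using Finset.induction_on with
  | empty => simpa using isSpline_const 0
  | insert a s hni ih =>
    simp only [Finset.sum_insert hni]
    exact (h a (Finset.mem_insert_self a s)).add
      (ih fun i hi => h i (Finset.mem_insert_of_mem hi))

lemma IsSpline.relu {k : ℕ} {f : (ι → ℝ) → ℝ} (hf : IsSpline ι k f) :
    IsSpline ι k (fun x => relu (f x)) := by
  classical
  obtain ⟨hcf, b, π, hd, hc⟩ := hf
  set Ξ : (Fin b → SignType) → MvPolynomial ι ℝ := fun θ => Classical.choose (hc θ) with hΞ
  have hΞspec : ∀ θ, (Ξ θ).totalDegree ≤ k ∧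
      ∀ x, (∀ i, SignType.sign (eval x (π i)) = θ i) → f x = eval x (Ξ θ) :=
    fun θ => Classical.choose_spec (hc θ)
  refine isSpline_of_fam (relu_continuous.comp hcf) (Sum.elim π (fun θ => Ξ θ))
    (by rintro (i|θ) <;> simp [hd, (hΞspec _).1]) fun Θ => ?_
  set θ : Fin b → SignType := Θ ∘ Sum.inl with hθ
  refine ⟨if Θ (Sum.inr θ) = SignType.neg then 0 else Ξ θ, ?_, fun x hx => ?_⟩
  · split <;> simp [(hΞspec θ).1]
  · have hfx : f x = eval x (Ξ θ) := (hΞspec θ).2 x fun i => hx (Sum.inl i)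
    have hsign : SignType.sign (eval x (Ξ θ)) = Θ (Sum.inr θ) := hx (Sum.inr θ)
    rcases h : Θ (Sum.inr θ) with _ | _ | _
    · have h0 : eval x (Ξ θ) = 0 := sign_eq_zero_iff.mp (by rw [hsign, h]; rfl)
      rw [if_neg (by decide), hfx, h0]
      exact max_self 0
    · have h0 : eval x (Ξ θ) < 0 := sign_eq_neg_one_iff.mp
        (by rw [hsign, h, SignType.neg_eq_neg_one])
      rw [if_pos rfl, map_zero, hfx]
      exact max_eq_right (le_of_lt h0)
    · have h0 : 0 < eval x (Ξ θ) := sign_eq_one_iff.mp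
        (by rw [hsign, h, SignType.pos_eq_one])
      rw [if_neg (by decide), hfx]
      exact max_eq_left (le_of_lt h0)

end SplineLemmas

lemma IsSpline.comp {ι : Type} [Fintype ι] {κ : Type} [Fintype κ] {m k : ℕ} (hm : 1 ≤ m)
    {F : (κ → ℝ) → ℝ} {g : κ → (ι → ℝ) → ℝ}
    (hF : IsSpline κ m F) (hg : ∀ j, IsSpline ι k (g j)) :
    IsSpline ι (m * k) (fun x => F (fun j => g j x)) := by
  classical
  obtain ⟨hcF, bF, ρ, hdF, hcellF⟩ := hF
  choose b π hspec using fun j => (hg j).2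
  set τ := Σ j : κ, Fin (b j) with hτ
  set πg : τ → MvPolynomial ι ℝ := fun s => π s.1 s.2 with hπg
  set Ξ : (τ → SignType) → κ → MvPolynomial ι ℝ :=
    fun Θ j => Classical.choose ((hspec j).2 (fun s => Θ ⟨j, s⟩)) with hΞ
  have hΞspec : ∀ Θ j, (Ξ Θ j).totalDegree ≤ k ∧
      ∀ x, (∀ s, SignType.sign (eval x (π j s)) = Θ ⟨j, s⟩) → g j x = eval x (Ξ Θ j) :=
    fun Θ j => Classical.choose_spec ((hspec j).2 (fun s => Θ ⟨j, s⟩))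
  have hcont : Continuous fun x => F (fun j => g j x) :=
    hcF.comp (continuous_pi fun j => (hg j).1)
  refine isSpline_of_fam hcont
    (Sum.elim πg (fun q : (τ → SignType) × Fin bF => bind₁ (Ξ q.1) (ρ q.2))) ?_ fun Θ' => ?_
  · rintro (s | ⟨Θ, i⟩)
    · exact ((hspec s.1).1 s.2).trans (Nat.le_mul_of_pos_left k hm)
    · exact (my_totalDegree_bind₁ _ (fun j => (hΞspec Θ j).1) _).trans
        (Nat.mul_le_mul_right _ (hdF i))
  · set Θ : τ → SignType := Θ' ∘ Sum.inl with hΘ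
    obtain ⟨ζ, hζ1, hζ2⟩ := hcellF (fun i => Θ' (Sum.inr (Θ, i)))
    refine ⟨bind₁ (Ξ Θ) ζ, (my_totalDegree_bind₁ _ (fun j => (hΞspec Θ j).1) _).trans
      (Nat.mul_le_mul_right _ hζ1), fun x hx => ?_⟩
    have hgx : ∀ j, g j x = eval x (Ξ Θ j) :=
      fun j => (hΞspec Θ j).2 x (fun s => hx (Sum.inl ⟨j, s⟩))
    have hy : (fun j => g j x) = fun j => eval x (Ξ Θ j) := funext hgx
    rw [hy, my_eval_bind₁]
    exact hζ2 _ (fun i => by rw [← my_eval_bind₁]; exact hx (Sum.inr (Θ, i)))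

end Aux

section Aux2
open MvPolynomial

lemma IsSpline.congr {ι : Type} [Fintype ι] {k : ℕ} {f g : (ι → ℝ) → ℝ}
    (h : IsSpline ι k f) (he : ∀ x, f x = g x) : IsSpline ι k g :=
  (funext he : f = g) ▸ h

lemma isSpline_affine {ι : Type} [Fintype ι] {κ : Type} [Fintype κ]
    (w : κ → ℝ) (e : κ → ι) (c0 : ℝ) :
    IsSpline ι 1 (fun x => ∑ s, w s * x (e s) + c0) := by
  have h := isSpline_eval (ι := ι) (k := 1)
    (ξ := (∑ s : κ, C (w s) * X (e s)) + C c0) ?_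
  · refine h.congr fun x => ?_
    simp
  · refine (totalDegree_add _ _).trans (max_le ?_ (by simp))
    refine totalDegree_finsetSum_le fun s _ => ?_
    exact (totalDegree_mul _ _).trans (by simp [totalDegree_X])

lemma nn_coord_spline {a c : ℕ} {φ : (Fin a → ℝ) → (Fin c → ℝ)} (h : IsNN φ) :
    ∀ i, IsSpline (Fin a) 1 (fun x => φ x i) := by
  induction h with
  | affine A v =>
    intro i
    refine (isSpline_affine (fun j => A i j) id (v i)).congr fun x => ?_
    simp [Matrix.mulVec, dotProduct]
  | layer A v hg ih =>
    intro i
    have inner : ∀ j, IsSpline (Fin _) 1 (fun x => relu (A.mulVec x j + v j)) := by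
      intro j
      refine IsSpline.relu ((isSpline_affine (fun u => A j u) id (v j)).congr fun x => ?_)
      simp [Matrix.mulVec, dotProduct]
    have := IsSpline.comp le_rfl (ih i) inner
    simpa using this

lemma maskedAttention_coord_spline {n p d m : ℕ}
    (AQ AK : Matrix (Fin d) (Fin n) ℝ) (AV : Matrix (Fin m) (Fin n) ℝ)
    (BQ BK : Matrix (Fin d) (Fin p) ℝ) (BV : Matrix (Fin m) (Fin p) ℝ)
    (i : Fin m) (j : Fin p) :
    IsSpline (Fin n × Fin p) 3
      (fun x => maskedAttention AQ AK AV BQ BK BV (Matrix.of fun a b => x (a, b)) i j) := by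
  have hform : (fun x : Fin n × Fin p → ℝ =>
      maskedAttention AQ AK AV BQ BK BV (Matrix.of fun a b => x (a, b)) i j) =
      fun x => ∑ l : Fin p, (∑ s : Fin n, AV i s * x (s, l) + BV i l) *
        (if l ≤ j then
          relu (∑ s : Fin d,
            (∑ u : Fin n, AK s u * x (u, l) + BK s l) *
            (∑ u : Fin n, AQ s u * x (u, j) + BQ s j))
         else 0) := by
    funext x
    simp only [maskedAttention, Matrix.mul_apply, Matrix.transpose_apply, Matrix.add_apply,
      Matrix.of_apply]
  rw [hform]
  refine isSpline_sum Finset.univ _ fun l _ => ?_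
  by_cases hlj : l ≤ j
  · simp only [if_pos hlj]
    have h1 : IsSpline (Fin n × Fin p) 1 (fun x => ∑ s : Fin n, AV i s * x (s, l) + BV i l) :=
      isSpline_affine (fun s => AV i s) (fun s => (s, l)) (BV i l)
    have h2 : IsSpline (Fin n × Fin p) 2 (fun x => ∑ s : Fin d,
        (∑ u : Fin n, AK s u * x (u, l) + BK s l) *
        (∑ u : Fin n, AQ s u * x (u, j) + BQ s j)) := by
      refine isSpline_sum Finset.univ _ fun s _ => ?_
      exact (isSpline_affine (fun u => AK s u) (fun u => (u, l)) (BK s l)).mul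
        (isSpline_affine (fun u => AQ s u) (fun u => (u, j)) (BQ s j))
    exact h1.mul h2.relu
  · simp only [if_neg hlj, mul_zero]
    exact isSpline_const 0

lemma decoderBlock_spline {n r p : ℕ} {f : Matrix (Fin n) (Fin p) ℝ → Matrix (Fin r) (Fin p) ℝ}
    (hf : IsDecoderBlock f) : IsMatrixSpline 3 f := by
  obtain ⟨d, m, h, AQ, AK, AV, BQ, BK, BV, φ, hφ, rfl⟩ := hf
  intro i j
  have key := IsSpline.comp (m := 1) (k := 3) le_rfl (nn_coord_spline hφ i)
    (g := fun rr x => multiheadMaskedAttention AQ AK AV BQ BK BV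
      (Matrix.of fun a b => x (a, b)) rr j)
    (fun rr => maskedAttention_coord_spline _ _ _ _ _ _ (finProdFinEquiv.symm rr).2 j)
  simpa [colwise] using key

end Aux2
/-- Every `t`-layer ReLU-activated decoder is a spline of degree `3^t`. -/
theorem decoder_is_spline (n r p t : ℕ)
    (f : Matrix (Fin n) (Fin p) ℝ → Matrix (Fin r) (Fin p) ℝ)
    (hf : IsDecoder t f) : IsMatrixSpline (3 ^ t) f := by
  induction hf with
  | block f hf =>
    rw [pow_one]
    exact decoderBlock_spline hf
  | comp t f g hf hg ih =>
    intro i j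
    have hblock := decoderBlock_spline hf
    have key := IsSpline.comp (m := 3 ^ t) (k := 3)
      (Nat.one_le_pow _ _ (by norm_num)) (ih i j)
      (g := fun q x => f (Matrix.of fun a b => x (a, b)) q.1 q.2)
      (fun q => hblock q.1 q.2)
    rw [pow_succ]
    exact key
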